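/- The complex projective plane ℂP² admits a separable Hopf link. -/

import Mathlib

/-!
Formalization following "Embeddings of 4-manifolds in ℂP³" by Ghanwat–Pancholi.

General conventions used throughout:
* An `n`-manifold is a type with a `ChartedSpace` structure over `EuclideanSpace ℝ (Fin n)`
  (or over a half-space model, for manifolds with boundary), which is a smooth manifold.
* "Closed" = compact (and boundaryless, which is automatic for the models `𝓡 n`).
* Orientations are encoded by `MOrientation`: an atlas of smoothly compatible charts with
  values in `ℝⁿ` whose transition maps have positive Jacobian determinant everywhere.
* The complex projective space `ℂPⁿ` is encoded as a type together with a homeomorphism to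
  `CPmodel n`, the projectivization of `ℂⁿ⁺¹` with its quotient topology, together with a
  (quantified) compatible smooth structure.
-/

open scoped Manifold LinearAlgebra.Projectivization
open Set Function Metric Topology

noncomputable section

abbrev En (n : ℕ) := EuclideanSpace ℝ (Fin n)

section Core
variable {EM HM : Type*} [NormedAddCommGroup EM] [NormedSpace ℝ EM] [TopologicalSpace HM]
variable {EM' HM' : Type*} [NormedAddCommGroup EM'] [NormedSpace ℝ EM'] [TopologicalSpace HM']
variable {M : Type*} [TopologicalSpace M] [ChartedSpace HM M]
variable {M' : Type*} [TopologicalSpace M'] [ChartedSpace HM' M']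

/-- A local chart of `M` with values in the normed space `F` which is smoothly compatible
with the smooth structure of `M` (a smooth local parameterization with smooth inverse). -/
def IsSmoothChartOn (I : ModelWithCorners ℝ EM HM) (F : Type*) [NormedAddCommGroup F]
    [NormedSpace ℝ F] (φ : PartialHomeomorph M F) : Prop :=
  ContMDiffOn I 𝓘(ℝ, F) (⊤ : ℕ∞) φ φ.source ∧ ContMDiffOn 𝓘(ℝ, F) I (⊤ : ℕ∞) φ.symm φ.target

/-- An orientation of an `n`-manifold `M`: an atlas of smoothly compatible charts with values
in `ℝⁿ`, covering the interior of `M`, whose transition maps have everywhere positive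
Jacobian determinant. -/
structure MOrientation (I : ModelWithCorners ℝ EM HM) (M : Type*) [TopologicalSpace M]
    [ChartedSpace HM M] (n : ℕ) where
  atlas : Set (PartialHomeomorph M (En n))
  smooth : ∀ e ∈ atlas, IsSmoothChartOn I (En n) e
  covers : ∀ x ∈ ModelWithCorners.interior (I := I) M, ∃ e ∈ atlas, x ∈ e.source
  pos : ∀ e ∈ atlas, ∀ e' ∈ atlas, ∀ p : M, p ∈ e.source → p ∈ e'.source →
    0 < LinearMap.det ((fderiv ℝ (↑e' ∘ ↑e.symm) (e p)).toLinearMap)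

/-- A manifold is orientable if it admits an orientation. -/
def MOrientable (I : ModelWithCorners ℝ EM HM) (M : Type*) [TopologicalSpace M]
    [ChartedSpace HM M] (n : ℕ) : Prop :=
  Nonempty (MOrientation I M n)

/-- The chart `φ` is positively oriented with respect to the orientation `o`. -/
def PosChart {I : ModelWithCorners ℝ EM HM} {n : ℕ} (o : MOrientation I M n)
    (φ : PartialHomeomorph M (En n)) : Prop :=
  ∀ e ∈ o.atlas, ∀ p : M, p ∈ e.source → p ∈ φ.source →
    0 < LinearMap.det ((fderiv ℝ (↑φ ∘ ↑e.symm) (e p)).toLinearMap)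

/-- The chart `φ` is negatively oriented with respect to the orientation `o`. -/
def NegChart {I : ModelWithCorners ℝ EM HM} {n : ℕ} (o : MOrientation I M n)
    (φ : PartialHomeomorph M (En n)) : Prop :=
  ∀ e ∈ o.atlas, ∀ p : M, p ∈ e.source → p ∈ φ.source →
    LinearMap.det ((fderiv ℝ (↑φ ∘ ↑e.symm) (e p)).toLinearMap) < 0

/-- A map between oriented manifolds is orientation preserving. -/
def OrientationPreservingMap {I : ModelWithCorners ℝ EM HM} {I' : ModelWithCorners ℝ EM' HM'}
    {n : ℕ} (o : MOrientation I M n) (o' : MOrientation I' M' n) (f : M → M') : Prop :=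
  ∀ e ∈ o.atlas, ∀ e' ∈ o'.atlas, ∀ p : M, p ∈ e.source → f p ∈ e'.source →
    0 < LinearMap.det ((fderiv ℝ (↑e' ∘ f ∘ ↑e.symm) (e p)).toLinearMap)

/-- `f : M → M'` is a smooth embedding: smooth, an immersion, and a topological embedding. -/
def IsSmoothEmbedding (I : ModelWithCorners ℝ EM HM) (I' : ModelWithCorners ℝ EM' HM')
    (f : M → M') : Prop :=
  ContMDiff I I' (⊤ : ℕ∞) f ∧ (∀ x, Function.Injective (mfderiv I I' f x)) ∧ IsEmbedding f

/-- `f` is a diffeomorphism of `M` (smooth, with smooth inverse). -/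
def IsDiffeomorphismOf (I : ModelWithCorners ℝ EM HM) (f : M → M) : Prop :=
  ContMDiff I I (⊤ : ℕ∞) f ∧ ∃ g : M → M, ContMDiff I I (⊤ : ℕ∞) g ∧
    Function.LeftInverse g f ∧ Function.RightInverse g f

/-- `ψ` is smoothly isotopic to the identity: there is a smooth family of diffeomorphisms
joining the identity to `ψ`. -/
def DiffeotopicToId (I : ModelWithCorners ℝ EM HM) (ψ : M → M) : Prop :=
  ∃ F : ℝ → M → M, ContMDiff (𝓘(ℝ, ℝ).prod I) I (⊤ : ℕ∞) (fun p : ℝ × M => F p.1 p.2) ∧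
    (∀ t, Function.Bijective (F t)) ∧ F 0 = id ∧ F 1 = ψ

end Core

section Models

/-- first complex coordinate on `ℝ⁴ = ℂ²`. -/
def cA (v : En 4) : ℂ := ⟨v 0, v 1⟩
/-- second complex coordinate on `ℝ⁴ = ℂ²`. -/
def cB (v : En 4) : ℂ := ⟨v 2, v 3⟩
def e2 (a b : ℝ) : En 2 := WithLp.toLp 2 ![a, b]
def e4 (a b c d : ℝ) : En 4 := WithLp.toLp 2 ![a, b, c, d]

/-- The local model `(z₁, z₂) ↦ z₁ z₂ : ℂ² → ℂ` of a Lefschetz singularity, as a map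
`ℝ⁴ → ℝ²`. -/
def lefschetzModel : En 4 → En 2 := fun v => e2 (cA v * cB v).re (cA v * cB v).im

/-- The local model `(t, x₁, x₂, x₃) ↦ (t, -x₁² + x₂² + x₃²)` of a `1`-fold singularity. -/
def oneFoldModel : En 4 → En 2 := fun v => e2 (v 0) (-(v 1) ^ 2 + (v 2) ^ 2 + (v 3) ^ 2)

/-- Topological model for complex projective `n`-space: the projectivization of `ℂⁿ⁺¹`
with the quotient topology. -/
abbrev CPmodel (n : ℕ) := ℙ ℂ (Fin (n + 1) → ℂ)

instance (n : ℕ) : TopologicalSpace (CPmodel n) :=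
  inferInstanceAs (TopologicalSpace (Quotient (projectivizationSetoid ℂ (Fin (n + 1) → ℂ))))

/-- The standard `ℂP¹ = {[z₀ : z₁ : 0]}` inside a copy of `ℂP²`.  (The condition
`(h x).rep 2 = 0` does not depend on the choice of representative.) -/
def stdLineCP2 {CP2 : Type*} [TopologicalSpace CP2] (h : CP2 ≃ₜ CPmodel 2) : Set CP2 :=
  {x | (h x).rep 2 = 0}

/-- The standard `ℂP¹ = {[z₀ : z₁ : 0 : 0]}` inside a copy of `ℂP³`. -/
def stdAxisCP3 {CP3 : Type*} [TopologicalSpace CP3] (h : CP3 ≃ₜ CPmodel 3) : Set CP3 :=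
  {x | (h x).rep 2 = 0 ∧ (h x).rep 3 = 0}

/-- The standard pencil of `ℂP³`: the family of hyperplanes through the standard line,
i.e. `[z₀ : z₁ : z₂ : z₃] ↦ [z₂ : z₃]`, defined away from the standard line (junk value on
the line itself). -/
def stdPencilCP3 {CP3 CP1 : Type*} [TopologicalSpace CP3] [TopologicalSpace CP1]
    (h3 : CP3 ≃ₜ CPmodel 3) (h1 : CP1 ≃ₜ CPmodel 1) : CP3 → CP1 := fun x =>
  if h : (![(h3 x).rep 2, (h3 x).rep 3] : Fin 2 → ℂ) ≠ 0 then
    h1.symm (Projectivization.mk ℂ _ h)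
  else h1.symm (Projectivization.mk ℂ ![1, 0] (by intro hc; simpa using congrFun hc 0))

end Models

section Genus

/-- `GenusCurves X k` : there are `k` disjoint embedded circles in `X` with connected
complement. -/
def GenusCurves (X : Type*) [TopologicalSpace X] (k : ℕ) : Prop :=
  ∃ c : Fin k → (↥(Metric.sphere (0 : ℂ) 1) → X),
    (∀ i, IsEmbedding (c i)) ∧
    (Pairwise fun i j => Disjoint (Set.range (c i)) (Set.range (c j))) ∧
    IsConnected (⋃ i, Set.range (c i))ᶜ

/-- A closed connected orientable surface has genus `g` iff `g` is the maximal number of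
disjoint embedded circles with connected complement; we use this as the definition of
"having genus `g`". -/
def HasGenus (X : Type*) [TopologicalSpace X] (g : ℕ) : Prop :=
  GenusCurves X g ∧ ¬ GenusCurves X (g + 1)

end Genus

section SHL

def unitDisk : Set ℂ := Metric.closedBall 0 1
def unitCircleSet : Set ℂ := Metric.sphere 0 1
/-- The bidisk `𝔻² × 𝔻² ⊆ ℂ²`, a model of the `4`-ball `𝔻⁴`. -/
def biDisk : Set (ℂ × ℂ) := unitDisk ×ˢ unitDisk

/-- A separable Hopf link in a `4`-manifold `N`: an embedded `4`-ball `𝔻² × 𝔻²` such that the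
Hopf link `∂𝔻² × {0} ⊔ {0} × ∂𝔻²` bounds two disjoint properly embedded disks contained in
the complement of the open `4`-ball. -/
structure SeparableHopfLink (N : Type*) [TopologicalSpace N] where
  e : ℂ × ℂ → N
  he : IsEmbedding (biDisk.restrict e)
  d₁ : ℂ → N
  d₂ : ℂ → N
  hd₁ : IsEmbedding (unitDisk.restrict d₁)
  hd₂ : IsEmbedding (unitDisk.restrict d₂)
  hbd₁ : d₁ '' unitCircleSet = e '' {p : ℂ × ℂ | p.1 ∈ unitCircleSet ∧ p.2 = 0}
  hbd₂ : d₂ '' unitCircleSet = e '' {p : ℂ × ℂ | p.1 = 0 ∧ p.2 ∈ unitCircleSet}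
  hdisj : Disjoint (d₁ '' unitDisk) (d₂ '' unitDisk)
  houtside₁ : Disjoint (d₁ '' unitDisk) (e '' interior biDisk)
  houtside₂ : Disjoint (d₂ '' unitDisk) (e '' interior biDisk)
  hproper₁ : Disjoint (d₁ '' Metric.ball 0 1) (e '' biDisk)
  hproper₂ : Disjoint (d₂ '' Metric.ball 0 1) (e '' biDisk)

/-- `N` admits a separable Hopf link. -/
def HasSeparableHopfLink (N : Type*) [TopologicalSpace N] : Prop :=
  Nonempty (SeparableHopfLink N)

end SHL

section Fibrations

variable {EM HM : Type*} [NormedAddCommGroup EM] [NormedSpace ℝ EM] [TopologicalSpace HM]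
variable {ET HT : Type*} [NormedAddCommGroup ET] [NormedSpace ℝ ET] [TopologicalSpace HT]
variable {M : Type*} [TopologicalSpace M] [ChartedSpace HM M]
variable {T : Type*} [TopologicalSpace T] [ChartedSpace HT T]

/-- `f` has a Lefschetz singularity at `x`: in orientation preserving smoothly compatible
charts around `x` and `f x`, the map `f` is `(z₁, z₂) ↦ z₁ z₂`. -/
def IsLefschetzSingularAt {I : ModelWithCorners ℝ EM HM} {J : ModelWithCorners ℝ ET HT}
    (oM : MOrientation I M 4) (oT : MOrientation J T 2) (f : M → T) (x : M) : Prop :=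
  ∃ (φ : PartialHomeomorph M (En 4)) (ψ : PartialHomeomorph T (En 2)),
    IsSmoothChartOn I (En 4) φ ∧ IsSmoothChartOn J (En 2) ψ ∧
    PosChart oM φ ∧ PosChart oT ψ ∧
    x ∈ φ.source ∧ φ x = 0 ∧ f x ∈ ψ.source ∧ ψ (f x) = 0 ∧
    ∀ y ∈ φ.source, f y ∈ ψ.source ∧ ψ (f y) = lefschetzModel (φ y)

/-- `f` has a `1`-fold singularity at `x`: in orientation preserving smoothly compatible
charts, `f` is `(t, x₁, x₂, x₃) ↦ (t, -x₁² + x₂² + x₃²)`. -/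
def IsOneFoldSingularAt {I : ModelWithCorners ℝ EM HM} {J : ModelWithCorners ℝ ET HT}
    (oM : MOrientation I M 4) (oT : MOrientation J T 2) (f : M → T) (x : M) : Prop :=
  ∃ (φ : PartialHomeomorph M (En 4)) (ψ : PartialHomeomorph T (En 2)),
    IsSmoothChartOn I (En 4) φ ∧ IsSmoothChartOn J (En 2) ψ ∧
    PosChart oM φ ∧ PosChart oT ψ ∧
    x ∈ φ.source ∧ φ x = 0 ∧ f x ∈ ψ.source ∧ ψ (f x) = 0 ∧
    ∀ y ∈ φ.source, f y ∈ ψ.source ∧ ψ (f y) = oneFoldModel (φ y)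

/-- `x` is a regular point of `f` (the differential is surjective). -/
def IsRegularPt (I : ModelWithCorners ℝ EM HM) (J : ModelWithCorners ℝ ET HT)
    (f : M → T) (x : M) : Prop :=
  Function.Surjective (mfderiv I J f x)

/-- The set of `1`-fold singular points of `f`. -/
def oneFoldLocus {I : ModelWithCorners ℝ EM HM} {J : ModelWithCorners ℝ ET HT}
    (oM : MOrientation I M 4) (oT : MOrientation J T 2) (f : M → T) : Set M :=
  {x | IsOneFoldSingularAt oM oT f x}

/-- The set of Lefschetz singular points of `f`. -/
def lefschetzLocus {I : ModelWithCorners ℝ EM HM} {J : ModelWithCorners ℝ ET HT}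
    (oM : MOrientation I M 4) (oT : MOrientation J T 2) (f : M → T) : Set M :=
  {x | IsLefschetzSingularAt oM oT f x}

/-- A broken Lefschetz fibration: a smooth map whose only singularities are Lefschetz or
`1`-fold singularities. -/
def IsBLF {I : ModelWithCorners ℝ EM HM} {J : ModelWithCorners ℝ ET HT}
    (oM : MOrientation I M 4) (oT : MOrientation J T 2) (f : M → T) : Prop :=
  ContMDiff I J (⊤ : ℕ∞) f ∧
    ∀ x : M, IsRegularPt I J f x ∨ IsLefschetzSingularAt oM oT f x ∨
      IsOneFoldSingularAt oM oT f x

/-- A simplified broken Lefschetz fibration (SBLF): a BLF whose `1`-fold singular set is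
connected, whose fibers are all connected, and which is injective on the `1`-fold singular
set and on the Lefschetz singular set. -/
def IsSBLF {I : ModelWithCorners ℝ EM HM} {J : ModelWithCorners ℝ ET HT}
    (oM : MOrientation I M 4) (oT : MOrientation J T 2) (f : M → T) : Prop :=
  IsBLF oM oT f ∧ IsPreconnected (oneFoldLocus oM oT f) ∧
    (∀ y : T, IsConnected (f ⁻¹' {y})) ∧
    Set.InjOn f (oneFoldLocus oM oT f) ∧ Set.InjOn f (lefschetzLocus oM oT f)

/-- A Lefschetz fibration: a smooth map whose only singularities are Lefschetz
singularities. -/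
def IsLefschetzFibration {I : ModelWithCorners ℝ EM HM} {J : ModelWithCorners ℝ ET HT}
    (oM : MOrientation I M 4) (oT : MOrientation J T 2) (f : M → T) : Prop :=
  ContMDiff I J (⊤ : ℕ∞) f ∧ ∀ x : M, IsRegularPt I J f x ∨ IsLefschetzSingularAt oM oT f x

/-- The set of critical values of `f`. -/
def criticalValues (I : ModelWithCorners ℝ EM HM) (J : ModelWithCorners ℝ ET HT)
    (f : M → T) : Set T :=
  f '' {x | ¬ IsRegularPt I J f x}

/-- A simplified Lefschetz fibration (SLF): a Lefschetz fibration whose critical values are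
isolated and whose fibers are connected. -/
def IsSLF {I : ModelWithCorners ℝ EM HM} {J : ModelWithCorners ℝ ET HT}
    (oM : MOrientation I M 4) (oT : MOrientation J T 2) (f : M → T) : Prop :=
  IsLefschetzFibration oM oT f ∧
    (∀ y ∈ criticalValues I J f, ∃ U : Set T, IsOpen U ∧ y ∈ U ∧
      U ∩ criticalValues I J f ⊆ {y}) ∧
    ∀ y : T, IsConnected (f ⁻¹' {y})

/-- `y` is a regular value of `f`. -/
def IsRegularValue (I : ModelWithCorners ℝ EM HM) (J : ModelWithCorners ℝ ET HT)
    (f : M → T) (y : T) : Prop :=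
  ∀ x ∈ f ⁻¹' {y}, IsRegularPt I J f x

/-- The lower genus fiber of the fibration `f` has genus `> k`: some regular fiber has
minimal genus `g` among all regular fibers, and `k < g`. -/
def LowerGenusGT (I : ModelWithCorners ℝ EM HM) (J : ModelWithCorners ℝ ET HT)
    (f : M → T) (k : ℕ) : Prop :=
  ∃ (y : T) (g : ℕ), IsRegularValue I J f y ∧ HasGenus ↥(f ⁻¹' {y}) g ∧ k < g ∧
    ∀ (y' : T) (g' : ℕ), IsRegularValue I J f y' → HasGenus ↥(f ⁻¹' {y'}) g' → g ≤ g'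

end Fibrations

section FlexibleStandard

variable {S N : Type*} [TopologicalSpace S] [ChartedSpace (En 2) S]
  [TopologicalSpace N] [ChartedSpace (En 4) N]

/-- The embedding `φ : Σ ↪ N` is flexible: every (orientation preserving) diffeomorphism of
`Σ`, i.e. every element of the mapping class group, is induced by a diffeomorphism of `N`
isotopic to the identity preserving `φ(Σ)`. -/
def FlexibleEmbedding (oS : MOrientation (𝓡 2) S 2) (φ : S → N) : Prop :=
  ∀ g : S → S, IsDiffeomorphismOf (𝓡 2) g → OrientationPreservingMap oS oS g →
    ∃ ψ : N → N, DiffeotopicToId (𝓡 4) ψ ∧ ψ '' Set.range φ = Set.range φ ∧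
      ∀ x, ψ (φ x) = φ (g x)

/-- The embedding `φ : Σ ↪ N` is in standard position: every simple closed curve `γ` on
`φ(Σ)` bounds an embedded disk meeting `φ(Σ)` only in `γ`, and this disk has a tubular
neighborhood which is the image of a smooth coordinate chart `ℂ² → N` in which `φ(Σ)`
corresponds to `{(z₁, z₂) | z₁ z₂ = 1}`. -/
def StandardPositionEmbedding (φ : S → N) : Prop :=
  ∀ γ : Set N, γ ⊆ Set.range φ →
    (∃ c : ↥(Metric.sphere (0 : ℂ) 1) → N, IsEmbedding c ∧ Set.range c = γ) →
    ∃ d : ℂ → N, IsEmbedding (unitDisk.restrict d) ∧ d '' unitCircleSet = γ ∧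
      (d '' unitDisk) ∩ Set.range φ = γ ∧
      ∃ Φ : ℂ × ℂ → N, IsOpenEmbedding Φ ∧ ContMDiff 𝓘(ℝ, ℂ × ℂ) (𝓡 4) (⊤ : ℕ∞) Φ ∧
        d '' unitDisk ⊆ Set.range Φ ∧
        Φ ⁻¹' (Set.range φ) = {p : ℂ × ℂ | p.1 * p.2 = 1}

/-- A standard embedding of a surface in a `4`-manifold: a smooth embedding which is
flexible and in standard position (this is the key property of the embeddings produced by
the construction of Ghanwat–Pancholi, Lemma 4.6). -/
def StandardEmbedding (oS : MOrientation (𝓡 2) S 2) (φ : S → N) : Prop :=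
  IsSmoothEmbedding (𝓡 2) (𝓡 4) φ ∧ FlexibleEmbedding oS φ ∧ StandardPositionEmbedding φ

end FlexibleStandard

section Intersections

variable {X : Type*} [TopologicalSpace X] [ChartedSpace (En 4) X]

def plane01 : Set (En 4) := {v | v 2 = 0 ∧ v 3 = 0}
def plane23 : Set (En 4) := {v | v 0 = 0 ∧ v 1 = 0}
def proj01 : En 4 → En 2 := fun v => e2 (v 0) (v 1)
def proj23 : En 4 → En 2 := fun v => e2 (v 2) (v 3)
def incl01 : En 2 → En 4 := fun w => e4 (w 0) (w 1) 0 0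

/-- An oriented smoothly embedded (unparameterized) surface `S` in a `4`-manifold `X`:
a family of smoothly compatible ambient charts flattening `S` onto the plane
`{x₂ = x₃ = 0}`, covering `S`, whose induced transition maps on the surface have positive
Jacobian determinant. -/
structure SubsurfaceOrientation (X : Type*) [TopologicalSpace X] [ChartedSpace (En 4) X]
    (S : Set X) where
  charts : Set (PartialHomeomorph X (En 4))
  smooth : ∀ φ ∈ charts, IsSmoothChartOn (𝓡 4) (En 4) φ
  flat : ∀ φ ∈ charts, φ.source ∩ S = φ.source ∩ ↑φ ⁻¹' plane01
  covers : S ⊆ ⋃ φ ∈ charts, φ.source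
  pos : ∀ φ ∈ charts, ∀ ψ ∈ charts, ∀ p ∈ S ∩ φ.source ∩ ψ.source,
    0 < LinearMap.det
      ((fderiv ℝ (proj01 ∘ ↑ψ ∘ ↑φ.symm ∘ incl01) (proj01 (φ p))).toLinearMap)

/-- The ambient chart `φ` restricts on the surface `S` (flattened via `pr`) positively with
respect to the surface orientation `oS`. -/
def ChartAligned {S : Set X} (oS : SubsurfaceOrientation X S) (pr : En 4 → En 2)
    (φ : PartialHomeomorph X (En 4)) : Prop :=
  ∀ e ∈ oS.charts, ∀ q ∈ S ∩ e.source ∩ φ.source,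
    0 < LinearMap.det
      ((fderiv ℝ (pr ∘ ↑φ ∘ ↑e.symm ∘ incl01) (proj01 (e q))).toLinearMap)

/-- The oriented surfaces `S`, `T` in the oriented `4`-manifold `(X, oX)` intersect
transversally at `p` with sign `s ∈ {±1}`: there is a smoothly compatible chart sending `S`
to `{x₂ = x₃ = 0}` and `T` to `{x₀ = x₁ = 0}`, aligned with the orientations of `S` and `T`,
which is positively (resp. negatively) oriented for `s = 1` (resp. `s = -1`). -/
def TransverseIntersectionAt (oX : MOrientation (𝓡 4) X 4) {S T : Set X}
    (oS : SubsurfaceOrientation X S) (oT : SubsurfaceOrientation X T) (p : X) (s : ℤ) :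
    Prop :=
  ∃ φ : PartialHomeomorph X (En 4), IsSmoothChartOn (𝓡 4) (En 4) φ ∧ p ∈ φ.source ∧
    φ p = 0 ∧
    φ.source ∩ S = φ.source ∩ ↑φ ⁻¹' plane01 ∧
    φ.source ∩ T = φ.source ∩ ↑φ ⁻¹' plane23 ∧
    ChartAligned oS proj01 φ ∧ ChartAligned oT proj23 φ ∧
    ((s = 1 ∧ PosChart oX φ) ∨ (s = -1 ∧ NegChart oX φ))

/-- The algebraic intersection number of the transverse oriented surfaces `S` and `T` in
`(X, oX)` equals `n`: all intersections are transverse and the signs sum to `n`. -/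
def IntersectionNumberEq (oX : MOrientation (𝓡 4) X 4) {S T : Set X}
    (oS : SubsurfaceOrientation X S) (oT : SubsurfaceOrientation X T) (n : ℤ) : Prop :=
  ∃ (P : Finset X) (sgn : X → ℤ), (P : Set X) = S ∩ T ∧
    (∀ p ∈ P, TransverseIntersectionAt oX oS oT p (sgn p)) ∧ ∑ p ∈ P, sgn p = n

/-- The map `ψ` carries the orientation `oS` of `S` to the orientation `oS'` of `S' = ψ(S)`. -/
def PushforwardAligned (ψ : X → X) {S S' : Set X} (oS : SubsurfaceOrientation X S)
    (oS' : SubsurfaceOrientation X S') : Prop :=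
  ∀ e ∈ oS.charts, ∀ e' ∈ oS'.charts, ∀ q ∈ S ∩ e.source, ψ q ∈ e'.source →
    0 < LinearMap.det
      ((fderiv ℝ (proj01 ∘ ↑e' ∘ ψ ∘ ↑e.symm ∘ incl01) (proj01 (e q))).toLinearMap)

/-- The self-intersection number of the oriented surface `(S, oS)` in `(X, oX)` equals `n`:
some copy of `S`, moved by a diffeomorphism isotopic to the identity with the transported
orientation, meets `S` transversally with total algebraic intersection number `n`. -/
def SelfIntersectionEq (oX : MOrientation (𝓡 4) X 4) {S : Set X}
    (oS : SubsurfaceOrientation X S) (n : ℤ) : Prop :=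
  ∃ ψ : X → X, DiffeotopicToId (𝓡 4) ψ ∧ ∃ oS' : SubsurfaceOrientation X (ψ '' S),
    PushforwardAligned ψ oS oS' ∧ IntersectionNumberEq oX oS' oS n

end Intersections

section BlowUp

instance factFinrank3 : Fact (Module.finrank ℝ (En 3) = 2 + 1) := ⟨finrank_euclideanSpace_fin⟩

/-- `X` together with the structure of the (topological) two-point blow-up
`M # ℂP² # (ℂP²-bar)` of the `4`-manifold `M` at two points `p₁ ≠ p₂`: a blow-down map
`bd : X → M` collapsing two disjoint exceptional spheres `Epos` (of self-intersection `+1`)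
and `Eneg` (of self-intersection `-1`) to `p₁` and `p₂`, and a diffeomorphism elsewhere. -/
structure TwoPointBlowUpData (X M : Type*) [TopologicalSpace X] [ChartedSpace (En 4) X]
    [TopologicalSpace M] [ChartedSpace (En 4) M] (oX : MOrientation (𝓡 4) X 4) where
  bd : X → M
  p₁ : M
  p₂ : M
  hp : p₁ ≠ p₂
  Epos : Set X
  Eneg : Set X
  hEpos : bd ⁻¹' {p₁} = Epos
  hEneg : bd ⁻¹' {p₂} = Eneg
  spherePos : Nonempty (↥Epos ≃ₜ ↥(Metric.sphere (0 : En 3) 1))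
  sphereNeg : Nonempty (↥Eneg ≃ₜ ↥(Metric.sphere (0 : En 3) 1))
  cont : Continuous bd
  surj : Function.Surjective bd
  injOn : Set.InjOn bd (Epos ∪ Eneg)ᶜ
  smoothOn : ContMDiffOn (𝓡 4) (𝓡 4) (⊤ : ℕ∞) bd (Epos ∪ Eneg)ᶜ
  isOpenImage : ∀ U : Set X, IsOpen U → U ⊆ (Epos ∪ Eneg)ᶜ → IsOpen (bd '' U)
  oEpos : SubsurfaceOrientation X Epos
  oEneg : SubsurfaceOrientation X Eneg
  selfIntPos : SelfIntersectionEq oX oEpos 1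
  selfIntNeg : SelfIntersectionEq oX oEneg (-1)

/-- The fibration `f` agrees with the standard fibration (by normal disks over `ℂP¹`) on a
tubular neighborhood of the exceptional sphere `E`. -/
def StandardFibrationNear {X CP1 : Type*} [TopologicalSpace X] [TopologicalSpace CP1]
    (f : X → CP1) (E : Set X) : Prop :=
  ∃ U : Set X, IsOpen U ∧ E ⊆ U ∧ Set.BijOn f E Set.univ ∧
    ∀ y : CP1, Nonempty (↥(f ⁻¹' {y} ∩ U) ≃ₜ ↥(Metric.ball (0 : ℂ) 1))

/-- Near the base point `b`, the pencil `π` is given in a smoothly compatible chart by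
`(z₁, z₂) ↦ [z₁ : z₂] (= z₂/z₁)`, where the chart is not required to preserve
orientations. -/
def BaseLocusModelAt {M CP1 : Type*} [TopologicalSpace M] [ChartedSpace (En 4) M]
    [TopologicalSpace CP1] (hCP1 : CP1 ≃ₜ CPmodel 1) (π : M → CP1) (b : M) : Prop :=
  ∃ φ : PartialHomeomorph M (En 4), IsSmoothChartOn (𝓡 4) (En 4) φ ∧ b ∈ φ.source ∧
    φ b = 0 ∧
    ∀ y ∈ φ.source, y ≠ b → ∃ h : (![cA (φ y), cB (φ y)] : Fin 2 → ℂ) ≠ 0,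
      hCP1 (π y) = Projectivization.mk ℂ ![cA (φ y), cB (φ y)] h

/-- A generalized simplified broken Lefschetz pencil on `M` with (finite) base locus `B`:
away from `B` the map is an SBLF, and near each base point it is `(z₁, z₂) ↦ z₂/z₁` in a
(not necessarily orientation preserving) chart. -/
def IsGeneralizedSBLP {M CP1 : Type*} [TopologicalSpace M] [ChartedSpace (En 4) M]
    [TopologicalSpace CP1] [ChartedSpace (En 2) CP1]
    (oM : MOrientation (𝓡 4) M 4) (oCP1 : MOrientation (𝓡 2) CP1 2)
    (hCP1 : CP1 ≃ₜ CPmodel 1) (π : M → CP1) (B : Set M) : Prop :=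
  B.Finite ∧
    ContMDiffOn (𝓡 4) (𝓡 2) (⊤ : ℕ∞) π Bᶜ ∧
    (∀ x ∉ B, IsRegularPt (𝓡 4) (𝓡 2) π x ∨ IsLefschetzSingularAt oM oCP1 π x ∨
      IsOneFoldSingularAt oM oCP1 π x) ∧
    IsPreconnected (oneFoldLocus oM oCP1 π ∩ Bᶜ) ∧
    Set.InjOn π (oneFoldLocus oM oCP1 π ∩ Bᶜ) ∧
    Set.InjOn π (lefschetzLocus oM oCP1 π ∩ Bᶜ) ∧
    (∀ y : CP1, IsPreconnected (π ⁻¹' {y} ∩ Bᶜ)) ∧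
    ∀ b ∈ B, BaseLocusModelAt hCP1 π b

end BlowUp

section CP2AuxSHL

namespace CP2AuxSHL

open Complex

/-- Sum of squared norms of the coordinates. -/
def den (v : Fin 3 → ℂ) : ℝ := ∑ i, Complex.normSq (v i)

/-- Measures linear independence of `v` from `w`. -/
def num (w v : Fin 3 → ℂ) : ℝ :=
  ∑ i, ∑ j, Complex.normSq (v i * w j - v j * w i)

lemma den_pos {v : Fin 3 → ℂ} (hv : v ≠ 0) : 0 < den v := by
  obtain ⟨i, hi⟩ := Function.ne_iff.1 hv
  exact Finset.sum_pos' (fun j _ => Complex.normSq_nonneg _)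
    ⟨i, Finset.mem_univ i, Complex.normSq_pos.2 hi⟩

lemma num_nonneg (w v : Fin 3 → ℂ) : 0 ≤ num w v :=
  Finset.sum_nonneg fun _ _ => Finset.sum_nonneg fun _ _ => Complex.normSq_nonneg _

lemma den_smul (t : ℂ) (v : Fin 3 → ℂ) : den (t • v) = Complex.normSq t * den v := by
  simp only [den, Finset.mul_sum, Pi.smul_apply, smul_eq_mul, Complex.normSq_mul]

lemma num_smul (w : Fin 3 → ℂ) (t : ℂ) (v : Fin 3 → ℂ) :
    num w (t • v) = Complex.normSq t * num w v := by
  simp only [num, Finset.mul_sum]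
  refine Finset.sum_congr rfl fun i _ => Finset.sum_congr rfl fun j _ => ?_
  rw [← Complex.normSq_mul, Pi.smul_apply, Pi.smul_apply, smul_eq_mul, smul_eq_mul,
    mul_sub, mul_assoc, mul_assoc]

lemma num_self (w : Fin 3 → ℂ) : num w w = 0 :=
  Finset.sum_eq_zero fun i _ => Finset.sum_eq_zero fun j _ => by
    rw [mul_comm, sub_self, Complex.normSq_zero]

/-- The scale-invariant separating function on `ℂP²`. -/
def sepFun (w : Fin 3 → ℂ) : CPmodel 2 → ℝ :=
  Projectivization.lift (fun v => num w v.1 / den v.1) (by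
    rintro ⟨a, ha⟩ ⟨b, hb⟩ t (h : a = t • b)
    have ht : t ≠ 0 := by rintro rfl; exact ha (by simpa using h)
    have hns : Complex.normSq t ≠ 0 := (Complex.normSq_pos.2 ht).ne'
    show num w a / den a = num w b / den b
    rw [h, num_smul, den_smul, mul_div_mul_left _ _ hns])

lemma continuous_sepFun (w : Fin 3 → ℂ) : Continuous (sepFun w) := by
  refine continuous_quot_lift _ ?_
  have hnum : Continuous fun v : Fin 3 → ℂ => num w v :=
    continuous_finset_sum _ fun i _ => continuous_finset_sum _ fun j _ =>
      Complex.continuous_normSq.comp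
        (((continuous_apply i).mul continuous_const).sub
          ((continuous_apply j).mul continuous_const))
  have hden : Continuous fun v : Fin 3 → ℂ => den v :=
    continuous_finset_sum _ fun i _ => Complex.continuous_normSq.comp (continuous_apply i)
  exact (hnum.comp continuous_subtype_val).div (hden.comp continuous_subtype_val)
    fun x => (den_pos x.2).ne'

lemma sepFun_mk (w v : Fin 3 → ℂ) (hv : v ≠ 0) :
    sepFun w (Projectivization.mk ℂ v hv) = num w v / den v :=
  Projectivization.lift_mk _ _ _ hv

instance : T2Space (CPmodel 2) := by
  refine ⟨fun x y hxy => ?_⟩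
  set w := y.rep with hw
  have hwne : w ≠ 0 := y.rep_nonzero
  have hy0 : sepFun w y = 0 := by
    conv_lhs => rw [← y.mk_rep]
    rw [sepFun_mk, num_self, zero_div]
  have hx : 0 < sepFun w x := by
    conv_rhs => rw [← x.mk_rep]
    rw [sepFun_mk]
    refine div_pos ((num_nonneg w x.rep).lt_of_ne' fun h0 => ?_) (den_pos x.rep_nonzero)
    -- if the numerator vanishes, x = y
    have hall : ∀ i j : Fin 3, x.rep i * w j = x.rep j * w i := by
      intro i j
      have h1 := (Finset.sum_eq_zero_iff_of_nonneg
        (fun i _ => Finset.sum_nonneg fun j _ => Complex.normSq_nonneg _)).1 h0 i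
        (Finset.mem_univ i)
      have h2 := (Finset.sum_eq_zero_iff_of_nonneg
        (fun j _ => Complex.normSq_nonneg _)).1 h1 j (Finset.mem_univ j)
      have := Complex.normSq_eq_zero.1 h2
      linear_combination (norm := ring_nf) this
    obtain ⟨j, hj'⟩ := Function.ne_iff.1 hwne
    have hj : w j ≠ 0 := by simpa using hj'
    have key : Projectivization.mk ℂ x.rep x.rep_nonzero = Projectivization.mk ℂ w hwne :=
      (Projectivization.mk_eq_mk_iff' ℂ _ _ x.rep_nonzero hwne).2
        ⟨x.rep j * (w j)⁻¹, funext fun i => by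
          have h := hall i j
          show x.rep j * (w j)⁻¹ * w i = x.rep i
          field_simp
          linear_combination -h⟩
    exact hxy (x.mk_rep.symm.trans (key.trans y.mk_rep))
  refine ⟨sepFun w ⁻¹' Set.Ioi (sepFun w x / 2), sepFun w ⁻¹' Set.Iio (sepFun w x / 2),
    isOpen_Ioi.preimage (continuous_sepFun w), isOpen_Iio.preimage (continuous_sepFun w),
    half_lt_self hx, by simpa [hy0] using half_pos hx, ?_⟩
  rw [Set.disjoint_left]
  intro a ha hb
  simp only [Set.mem_preimage, Set.mem_Ioi, Set.mem_Iio] at ha hb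
  exact absurd (ha.trans hb) (lt_irrefl _)

/-! ### The explicit separable Hopf link in the model `ℂP²`. -/

lemma vecE_ne (p : ℂ × ℂ) : (![1, p.1, p.2] : Fin 3 → ℂ) ≠ 0 := fun h => by
  simpa using congrFun h 0

lemma vecD1_ne (z : ℂ) : (![z, 1, 0] : Fin 3 → ℂ) ≠ 0 := fun h => by
  simpa using congrFun h 1

lemma vecD2_ne (z : ℂ) : (![z, 0, 1] : Fin 3 → ℂ) ≠ 0 := fun h => by
  simpa using congrFun h 2

/-- The embedded bidisk `[1 : z₁ : z₂]`. -/
def E0 : ℂ × ℂ → CPmodel 2 := fun p => Projectivization.mk ℂ ![1, p.1, p.2] (vecE_ne p)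

/-- First disk `[z : 1 : 0]`. -/
def D1 : ℂ → CPmodel 2 := fun z => Projectivization.mk ℂ ![z, 1, 0] (vecD1_ne z)

/-- Second disk `[z : 0 : 1]`. -/
def D2 : ℂ → CPmodel 2 := fun z => Projectivization.mk ℂ ![z, 0, 1] (vecD2_ne z)

lemma continuous_mkP : Continuous
    (fun v : {v : Fin 3 → ℂ // v ≠ 0} => Projectivization.mk ℂ v.1 v.2) :=
  continuous_quot_mk

lemma continuous_E0 : Continuous E0 := by
  have : Continuous fun p : ℂ × ℂ => (![1, p.1, p.2] : Fin 3 → ℂ) := by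
    refine continuous_pi fun i => ?_
    fin_cases i
    · simpa using continuous_const
    · simpa using continuous_fst
    · simpa using continuous_snd
  exact continuous_mkP.comp (this.subtype_mk vecE_ne)

lemma continuous_D1 : Continuous D1 := by
  have : Continuous fun z : ℂ => (![z, 1, 0] : Fin 3 → ℂ) := by
    refine continuous_pi fun i => ?_
    fin_cases i
    · simpa using continuous_id'
    · simpa using (continuous_const : Continuous fun _ : ℂ => (1:ℂ))
    · simpa using (continuous_const : Continuous fun _ : ℂ => (0:ℂ))
  exact continuous_mkP.comp (this.subtype_mk vecD1_ne)

lemma continuous_D2 : Continuous D2 := by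
  have : Continuous fun z : ℂ => (![z, 0, 1] : Fin 3 → ℂ) := by
    refine continuous_pi fun i => ?_
    fin_cases i
    · simpa using continuous_id'
    · simpa using (continuous_const : Continuous fun _ : ℂ => (0:ℂ))
    · simpa using (continuous_const : Continuous fun _ : ℂ => (1:ℂ))
  exact continuous_mkP.comp (this.subtype_mk vecD2_ne)

lemma injective_E0 : Function.Injective E0 := by
  intro p q h
  obtain ⟨a, ha⟩ := (Projectivization.mk_eq_mk_iff' ℂ _ _ (vecE_ne q) (vecE_ne p)).1 h.symm
  have h0 := congrFun ha 0
  have h1 := congrFun ha 1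
  have h2 := congrFun ha 2
  simp [Pi.smul_apply, smul_eq_mul] at h0 h1 h2
  subst h0
  exact Prod.ext (by simpa using h1) (by simpa using h2)

lemma injective_D1 : Function.Injective D1 := by
  intro z w h
  obtain ⟨a, ha⟩ := (Projectivization.mk_eq_mk_iff' ℂ _ _ (vecD1_ne w) (vecD1_ne z)).1 h.symm
  have h0 := congrFun ha 0
  have h1 := congrFun ha 1
  simp [Pi.smul_apply, smul_eq_mul] at h0 h1
  subst h1; simpa using h0

lemma injective_D2 : Function.Injective D2 := by
  intro z w h
  obtain ⟨a, ha⟩ := (Projectivization.mk_eq_mk_iff' ℂ _ _ (vecD2_ne w) (vecD2_ne z)).1 h.symm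
  have h0 := congrFun ha 0
  have h2 := congrFun ha 2
  simp [Pi.smul_apply, smul_eq_mul] at h0 h2
  subst h2; simpa using h0

/-- If `D1 z = E0 p` then `z * p.1 = 1` and `p.2 = 0`. -/
lemma D1_eq_E0 {z : ℂ} {p : ℂ × ℂ} (h : D1 z = E0 p) : z * p.1 = 1 ∧ p.2 = 0 := by
  obtain ⟨a, ha⟩ := (Projectivization.mk_eq_mk_iff' ℂ _ _ (vecD1_ne z) (vecE_ne p)).1 h
  have h0 := congrFun ha 0
  have h1 := congrFun ha 1
  have h2 := congrFun ha 2
  simp [Pi.smul_apply, smul_eq_mul] at h0 h1 h2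
  subst h0
  exact ⟨h1, h2.resolve_left (left_ne_zero_of_mul_eq_one h1)⟩

/-- If `D2 z = E0 p` then `z * p.2 = 1` and `p.1 = 0`. -/
lemma D2_eq_E0 {z : ℂ} {p : ℂ × ℂ} (h : D2 z = E0 p) : z * p.2 = 1 ∧ p.1 = 0 := by
  obtain ⟨a, ha⟩ := (Projectivization.mk_eq_mk_iff' ℂ _ _ (vecD2_ne z) (vecE_ne p)).1 h
  have h0 := congrFun ha 0
  have h1 := congrFun ha 1
  have h2 := congrFun ha 2
  simp [Pi.smul_apply, smul_eq_mul] at h0 h1 h2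
  subst h0
  exact ⟨h2, h1.resolve_left (left_ne_zero_of_mul_eq_one h2)⟩

lemma D1_ne_D2 (z w : ℂ) : D1 z ≠ D2 w := by
  intro h
  obtain ⟨a, ha⟩ := (Projectivization.mk_eq_mk_iff' ℂ _ _ (vecD1_ne z) (vecD2_ne w)).1 h
  have h1 := congrFun ha 1
  simp [Pi.smul_apply, smul_eq_mul] at h1

lemma D1_boundary : D1 '' unitCircleSet = E0 '' {p : ℂ × ℂ | p.1 ∈ unitCircleSet ∧ p.2 = 0} := by
  ext x
  constructor
  · rintro ⟨z, hz, rfl⟩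
    rw [unitCircleSet, mem_sphere_zero_iff_norm] at hz
    have hz0 : z ≠ 0 := by intro h; rw [h] at hz; simp at hz
    refine ⟨(z⁻¹, 0), ⟨by rw [unitCircleSet, mem_sphere_zero_iff_norm]; simp [hz], rfl⟩, ?_⟩
    refine (Projectivization.mk_eq_mk_iff' ℂ ![1, z⁻¹, 0] ![z, 1, 0] (vecE_ne (z⁻¹, 0))
      (vecD1_ne z)).2 ⟨z⁻¹, funext fun i => ?_⟩
    fin_cases i <;> simp [Pi.smul_apply, smul_eq_mul, inv_mul_cancel₀ hz0]
  · rintro ⟨⟨w, w2⟩, ⟨hw, hw2⟩, rfl⟩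
    rw [unitCircleSet, mem_sphere_zero_iff_norm] at hw
    have hw0 : w ≠ 0 := by intro h; rw [h] at hw; simp at hw
    refine ⟨w⁻¹, by rw [unitCircleSet, mem_sphere_zero_iff_norm]; simp [hw], ?_⟩
    subst hw2
    refine (Projectivization.mk_eq_mk_iff' ℂ ![w⁻¹, 1, 0] ![1, w, 0] (vecD1_ne w⁻¹)
      (vecE_ne (w, 0))).2 ⟨w⁻¹, funext fun i => ?_⟩
    fin_cases i <;> simp [Pi.smul_apply, smul_eq_mul, inv_mul_cancel₀ hw0]

lemma D2_boundary : D2 '' unitCircleSet = E0 '' {p : ℂ × ℂ | p.1 = 0 ∧ p.2 ∈ unitCircleSet} := by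
  ext x
  constructor
  · rintro ⟨z, hz, rfl⟩
    rw [unitCircleSet, mem_sphere_zero_iff_norm] at hz
    have hz0 : z ≠ 0 := by intro h; rw [h] at hz; simp at hz
    refine ⟨(0, z⁻¹), ⟨rfl, by rw [unitCircleSet, mem_sphere_zero_iff_norm]; simp [hz]⟩, ?_⟩
    refine (Projectivization.mk_eq_mk_iff' ℂ ![1, 0, z⁻¹] ![z, 0, 1] (vecE_ne (0, z⁻¹))
      (vecD2_ne z)).2 ⟨z⁻¹, funext fun i => ?_⟩
    fin_cases i <;> simp [Pi.smul_apply, smul_eq_mul, inv_mul_cancel₀ hz0]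
  · rintro ⟨⟨w1, w⟩, ⟨hw1, hw⟩, rfl⟩
    rw [unitCircleSet, mem_sphere_zero_iff_norm] at hw
    have hw0 : w ≠ 0 := by intro h; rw [h] at hw; simp at hw
    refine ⟨w⁻¹, by rw [unitCircleSet, mem_sphere_zero_iff_norm]; simp [hw], ?_⟩
    subst hw1
    refine (Projectivization.mk_eq_mk_iff' ℂ ![w⁻¹, 0, 1] ![1, 0, w] (vecD2_ne w⁻¹)
      (vecE_ne (0, w))).2 ⟨w⁻¹, funext fun i => ?_⟩
    fin_cases i <;> simp [Pi.smul_apply, smul_eq_mul, inv_mul_cancel₀ hw0]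

lemma interior_biDisk : interior biDisk = Metric.ball (0:ℂ) 1 ×ˢ Metric.ball (0:ℂ) 1 := by
  rw [biDisk, interior_prod_eq, unitDisk, interior_closedBall (0:ℂ) one_ne_zero]

end CP2AuxSHL

end CP2AuxSHL
/-- The complex projective plane `ℂP²` admits a separable Hopf link. -/
theorem CP2_has_separableHopfLink
    (CP2 : Type*) [TopologicalSpace CP2] (hCP2 : CP2 ≃ₜ CPmodel 2) :
    HasSeparableHopfLink CP2 := by
  classical
  have hBD : IsCompact biDisk := (isCompact_closedBall _ _).prod (isCompact_closedBall _ _)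
  have hUD : IsCompact unitDisk := isCompact_closedBall _ _
  haveI : CompactSpace ↥biDisk := isCompact_iff_compactSpace.1 hBD
  haveI : CompactSpace ↥unitDisk := isCompact_iff_compactSpace.1 hUD
  have hembE : IsEmbedding (biDisk.restrict CP2AuxSHL.E0) :=
    ((CP2AuxSHL.continuous_E0.comp continuous_subtype_val).isClosedEmbedding
      (CP2AuxSHL.injective_E0.comp Subtype.val_injective)).isEmbedding
  have hembD1 : IsEmbedding (unitDisk.restrict CP2AuxSHL.D1) :=
    ((CP2AuxSHL.continuous_D1.comp continuous_subtype_val).isClosedEmbedding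
      (CP2AuxSHL.injective_D1.comp Subtype.val_injective)).isEmbedding
  have hembD2 : IsEmbedding (unitDisk.restrict CP2AuxSHL.D2) :=
    ((CP2AuxSHL.continuous_D2.comp continuous_subtype_val).isClosedEmbedding
      (CP2AuxSHL.injective_D2.comp Subtype.val_injective)).isEmbedding
  have hinj := hCP2.symm.injective
  -- model-level disjointness facts
  have hdisj0 : Disjoint (CP2AuxSHL.D1 '' unitDisk) (CP2AuxSHL.D2 '' unitDisk) := by
    rw [Set.disjoint_left]
    rintro a ⟨z, _, rfl⟩ ⟨w, _, heq⟩
    exact CP2AuxSHL.D1_ne_D2 z w heq.symm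
  have hout1 : Disjoint (CP2AuxSHL.D1 '' unitDisk) (CP2AuxSHL.E0 '' interior biDisk) := by
    rw [Set.disjoint_left]
    rintro a ⟨z, hz, rfl⟩ ⟨p, hp, heq⟩
    rw [CP2AuxSHL.interior_biDisk] at hp
    obtain ⟨h1, _⟩ := CP2AuxSHL.D1_eq_E0 heq.symm
    rw [unitDisk, mem_closedBall_zero_iff] at hz
    have hp1 : ‖p.1‖ < 1 := by simpa [mem_ball_zero_iff] using hp.1
    have : ‖z‖ * ‖p.1‖ = 1 := by rw [← norm_mul, h1, norm_one]
    nlinarith [norm_nonneg z, norm_nonneg p.1]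
  have hout2 : Disjoint (CP2AuxSHL.D2 '' unitDisk) (CP2AuxSHL.E0 '' interior biDisk) := by
    rw [Set.disjoint_left]
    rintro a ⟨z, hz, rfl⟩ ⟨p, hp, heq⟩
    rw [CP2AuxSHL.interior_biDisk] at hp
    obtain ⟨h1, _⟩ := CP2AuxSHL.D2_eq_E0 heq.symm
    rw [unitDisk, mem_closedBall_zero_iff] at hz
    have hp2 : ‖p.2‖ < 1 := by simpa [mem_ball_zero_iff] using hp.2
    have : ‖z‖ * ‖p.2‖ = 1 := by rw [← norm_mul, h1, norm_one]
    nlinarith [norm_nonneg z, norm_nonneg p.2]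
  have hprop1 : Disjoint (CP2AuxSHL.D1 '' Metric.ball 0 1) (CP2AuxSHL.E0 '' biDisk) := by
    rw [Set.disjoint_left]
    rintro a ⟨z, hz, rfl⟩ ⟨p, hp, heq⟩
    obtain ⟨h1, _⟩ := CP2AuxSHL.D1_eq_E0 heq.symm
    rw [mem_ball_zero_iff] at hz
    have hp1 : ‖p.1‖ ≤ 1 := by
      have := hp.1; rwa [unitDisk, mem_closedBall_zero_iff] at this
    have : ‖z‖ * ‖p.1‖ = 1 := by rw [← norm_mul, h1, norm_one]
    nlinarith [norm_nonneg z, norm_nonneg p.1]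
  have hprop2 : Disjoint (CP2AuxSHL.D2 '' Metric.ball 0 1) (CP2AuxSHL.E0 '' biDisk) := by
    rw [Set.disjoint_left]
    rintro a ⟨z, hz, rfl⟩ ⟨p, hp, heq⟩
    obtain ⟨h1, _⟩ := CP2AuxSHL.D2_eq_E0 heq.symm
    rw [mem_ball_zero_iff] at hz
    have hp2 : ‖p.2‖ ≤ 1 := by
      have := hp.2; rwa [unitDisk, mem_closedBall_zero_iff] at this
    have : ‖z‖ * ‖p.2‖ = 1 := by rw [← norm_mul, h1, norm_one]
    nlinarith [norm_nonneg z, norm_nonneg p.2]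
  exact ⟨{
    e := hCP2.symm ∘ CP2AuxSHL.E0
    he := hCP2.symm.isEmbedding.comp hembE
    d₁ := hCP2.symm ∘ CP2AuxSHL.D1
    d₂ := hCP2.symm ∘ CP2AuxSHL.D2
    hd₁ := hCP2.symm.isEmbedding.comp hembD1
    hd₂ := hCP2.symm.isEmbedding.comp hembD2
    hbd₁ := by rw [Set.image_comp, Set.image_comp, CP2AuxSHL.D1_boundary]
    hbd₂ := by rw [Set.image_comp, Set.image_comp, CP2AuxSHL.D2_boundary]
    hdisj := by
      rw [Set.image_comp, Set.image_comp]
      exact (Set.disjoint_image_iff hinj).2 hdisj0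
    houtside₁ := by
      rw [Set.image_comp, Set.image_comp]
      exact (Set.disjoint_image_iff hinj).2 hout1
    houtside₂ := by
      rw [Set.image_comp, Set.image_comp]
      exact (Set.disjoint_image_iff hinj).2 hout2
    hproper₁ := by
      rw [Set.image_comp, Set.image_comp]
      exact (Set.disjoint_image_iff hinj).2 hprop1
    hproper₂ := by
      rw [Set.image_comp, Set.image_comp]
      exact (Set.disjoint_image_iff hinj).2 hprop2 }⟩
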